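/- Let H be a real Hilbert space, A a self-adjoint nonnegative bounded operator on H, Q the orthogonal projection onto (ker A)^⊥ satisfying |Qu|² ≤ (1/ν)|A^{1/2}u|² for some ν > 0 and all u. Let δ > 0, μ = min{1/2, ν/2, δ/2, ν/(5δ)}, let g : [0,∞) → H be continuous, and let u be a C² solution of u''(t) + 2δu'(t) + Au(t) = g(t). Define Ê(t) = |u'(t)|² + |A^{1/2}u(t)|² + 2μ⟨u'(t), Qu(t)⟩. Then for all t ≥ 0: Ê'(t) ≤ -(μ/2) Ê(t) + (2/δ)|g(t)|². -/

import Mathlib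

open scoped RealInnerProductSpace

set_option maxHeartbeats 1000000

lemma stmt9_scalar (ν δ μ a b c G X Y gp gq : ℝ)
    (hν : 0 < ν) (hδ : 0 < δ) (hμ0 : 0 < μ) (hμ1 : μ ≤ δ/2) (hμ2 : 5*δ*μ ≤ ν)
    (ha : 0 ≤ a) (hc : 0 ≤ c) (hG : 0 ≤ G)
    (hX1 : X ≤ a*c) (hX2 : -(a*c) ≤ X) (hc2 : ν*c^2 ≤ b^2)
    (hY0 : 0 ≤ Y) (hY : Y ≤ a^2) (hgp : gp ≤ G*a) (hgq : gq ≤ G*c) :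
    2*gp - 4*δ*a^2 + 2*μ*gq - 4*μ*δ*X - 2*μ*b^2 + 2*μ*Y
      ≤ -(μ/2) * (a^2 + b^2 + 2*μ*X) + (2/δ) * G^2 := by
  have hδν : 0 < δ * ν := mul_pos hδ hν
  have key : δ * ν * (2*gp - 4*δ*a^2 + 2*μ*gq - 4*μ*δ*X - 2*μ*b^2 + 2*μ*Y
      + (μ/2) * (a^2 + b^2 + 2*μ*X)) ≤ 2*ν*G^2 := by
    have P1a : 2*δ*gp ≤ G^2 + δ^2*a^2 := by
      nlinarith [sq_nonneg (G - δ*a), mul_nonneg hδ.le (sub_nonneg.mpr hgp)]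
    have P1 := mul_le_mul_of_nonneg_left P1a hν.le
    have P2a : 2*δ*(μ*gq) ≤ G^2 + δ^2*μ^2*c^2 := by
      nlinarith [sq_nonneg (G - δ*μ*c), mul_nonneg (mul_nonneg hδ.le hμ0.le) (sub_nonneg.mpr hgq)]
    have P2 := mul_le_mul_of_nonneg_left P2a hν.le
    have h5 : 5*δ*μ*c^2 ≤ b^2 := le_trans (mul_le_mul_of_nonneg_right hμ2 (sq_nonneg c)) hc2
    have P3 : ν*(δ^2*μ^2*c^2) ≤ ν*((δ*μ/5)*b^2) := by
      nlinarith [mul_le_mul_of_nonneg_left h5 (show (0:ℝ) ≤ ν*δ*μ/5 by positivity)]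
    have hX2' : -X ≤ a*c := by linarith
    have hcoef : (0:ℝ) ≤ 4*μ*δ - μ*μ := by nlinarith
    have hc0 : (μ*μ - 4*μ*δ) * X ≤ 4*μ*δ*(a*c) := by
      have t1 := mul_le_mul_of_nonneg_left hX2' hcoef
      have t2 : (0:ℝ) ≤ μ*μ*(a*c) := mul_nonneg (mul_nonneg hμ0.le hμ0.le) (mul_nonneg ha hc)
      linarith [t1, t2]
    have P4 := mul_le_mul_of_nonneg_left hc0 hδν.le
    have q1 : 4*δ*ν*(a*c) ≤ 4*δ^2*a^2 + ν*b^2 := by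
      nlinarith [sq_nonneg (2*δ*a - ν*c), mul_le_mul_of_nonneg_left hc2 hν.le]
    have P5 := mul_le_mul_of_nonneg_left q1 (mul_nonneg hμ0.le hδ.le)
    have P6' : 4*μ*δ^3 ≤ (4/5)*δ^2*ν := by
      nlinarith [mul_le_mul_of_nonneg_left hμ2 (mul_nonneg hδ.le hδ.le)]
    have P6a := mul_le_mul_of_nonneg_right P6' (sq_nonneg a)
    have P7' : 2*μ*δ*ν ≤ δ^2*ν := by nlinarith [mul_le_mul_of_nonneg_left hμ1 (by positivity : (0:ℝ) ≤ 2*δ*ν)]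
    have P7a := mul_le_mul_of_nonneg_right P7' (sq_nonneg a)
    have P8 : δ*ν*(2*μ*Y) ≤ δ*ν*(2*μ*a^2) := by
      have := mul_le_mul_of_nonneg_left hY (by positivity : (0:ℝ) ≤ δ*ν*(2*μ))
      linarith
    have N1 : (0:ℝ) ≤ ν*δ^2*a^2 := by positivity
    have N2 : (0:ℝ) ≤ μ*δ*ν*b^2 := by positivity
    linarith [P1, P2, P3, P4, P5, P6a, P7a, P8, N1, N2]
  have h2 : (2/δ) * G^2 = (2*ν*G^2)/(δ*ν) := by field_simp
  have h3 : 2*gp - 4*δ*a^2 + 2*μ*gq - 4*μ*δ*X - 2*μ*b^2 + 2*μ*Y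
      + (μ/2) * (a^2 + b^2 + 2*μ*X) ≤ (2*ν*G^2)/(δ*ν) :=
    (le_div_iff₀ hδν).mpr (by linarith [key])
  linarith [h3, h2.le, h2.ge]

/-- Differential inequality for the modified hyperbolic energy:
Ê'(t) ≤ -(μ/2)Ê(t) + (2/δ)|g(t)|². -/
theorem stmt9 {H : Type*} [NormedAddCommGroup H] [InnerProductSpace ℝ H] [CompleteSpace H]
    (A S Q : H →L[ℝ] H)
    (hA : IsSelfAdjoint A) (hApos : ∀ u : H, 0 ≤ (@inner ℝ H _ (A u) (u)))
    (hS : IsSelfAdjoint S) (hSpos : ∀ u : H, 0 ≤ (@inner ℝ H _ (S u) (u))) (hSA : S.comp S = A)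
    (hQ1 : Q.comp Q = Q) (hQ2 : IsSelfAdjoint Q)
    (hQ3 : LinearMap.range (Q : H →ₗ[ℝ] H) = (LinearMap.ker (A : H →ₗ[ℝ] H))ᗮ)
    (ν δ : ℝ) (hν : 0 < ν) (hδ : 0 < δ)
    (hQbound : ∀ u : H, ‖Q u‖^2 ≤ (1/ν) * ‖S u‖^2)
    (μ : ℝ) (hμ : μ = min (min (1/2) (ν/2)) (min (δ/2) (ν/(5*δ))))
    (g : ℝ → H) (hg : Continuous g)
    (u : ℝ → H) (hu : ContDiff ℝ 2 u)
    (hODE : ∀ t ≥ (0:ℝ), deriv (deriv u) t + (2*δ) • deriv u t + A (u t) = g t) :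
    ∀ t ≥ (0:ℝ),
      deriv (fun s => ‖deriv u s‖^2 + ‖S (u s)‖^2 + 2*μ*(@inner ℝ H _ (deriv u s) (Q (u s)))) t ≤
        -(μ/2) * (‖deriv u t‖^2 + ‖S (u t)‖^2 + 2*μ*(@inner ℝ H _ (deriv u t) (Q (u t))))
        + (2/δ) * ‖g t‖^2 := by
  -- basic facts about μ
  have hμ0 : 0 < μ := by
    rw [hμ]; simp only [lt_min_iff]
    refine ⟨⟨by norm_num, by positivity⟩, by positivity, by positivity⟩
  have hμ1 : μ ≤ δ/2 := hμ ▸ le_trans (min_le_right _ _) (min_le_left _ _)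
  have hμ2 : 5*δ*μ ≤ ν := by
    have h := hμ ▸ le_trans (min_le_right (min (1/2) (ν/2)) _) (min_le_right (δ/2) _)
    have := (le_div_iff₀ (by positivity : (0:ℝ) < 5*δ)).mp h
    linarith
  -- operator facts
  have hSS : ∀ x : H, S (S x) = A x := fun x => by
    rw [← ContinuousLinearMap.comp_apply, hSA]
  have hQQ : ∀ x : H, Q (Q x) = Q x := fun x => by
    rw [← ContinuousLinearMap.comp_apply, hQ1]
  have hSsym := hS.isSymmetric
  have hQsym := hQ2.isSymmetric
  have hAsym := hA.isSymmetric
  -- differentiability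
  have hdu : Differentiable ℝ u := hu.differentiable two_ne_zero
  have hu2 : ContDiff ℝ (1+1) u := by
    have : ((2:ℕ) : WithTop ℕ∞) = 1 + 1 := by norm_num
    exact this ▸ hu
  have hdp : Differentiable ℝ (deriv u) :=
    ((contDiff_succ_iff_deriv.mp hu2).2.2).differentiable one_ne_zero
  intro t ht
  have hp : HasDerivAt u (deriv u t) t := (hdu t).hasDerivAt
  have hp' : HasDerivAt (deriv u) (deriv (deriv u) t) t := (hdp t).hasDerivAt
  -- derivative computation
  have h1 : HasDerivAt (fun s => ‖deriv u s‖^2)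
      (⟪deriv u t, deriv (deriv u) t⟫ + ⟪deriv (deriv u) t, deriv u t⟫) t := by
    have := hp'.inner ℝ hp'
    simpa only [real_inner_self_eq_norm_sq] using this
  have hSu : HasDerivAt (fun s => S (u s)) (S (deriv u t)) t :=
    (S.hasFDerivAt).comp_hasDerivAt t hp
  have h2 : HasDerivAt (fun s => ‖S (u s)‖^2)
      (⟪S (u t), S (deriv u t)⟫ + ⟪S (deriv u t), S (u t)⟫) t := by
    have := hSu.inner ℝ hSu
    simpa only [real_inner_self_eq_norm_sq] using this
  have hQu : HasDerivAt (fun s => Q (u s)) (Q (deriv u t)) t :=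
    (Q.hasFDerivAt).comp_hasDerivAt t hp
  have h3 : HasDerivAt (fun s => 2*μ*(⟪deriv u s, Q (u s)⟫))
      (2*μ*(⟪deriv u t, Q (deriv u t)⟫ + ⟪deriv (deriv u) t, Q (u t)⟫)) t :=
    (hp'.inner ℝ hQu).const_mul (2*μ)
  have hE : deriv (fun s => ‖deriv u s‖^2 + ‖S (u s)‖^2 + 2*μ*(⟪deriv u s, Q (u s)⟫)) t = _ :=
    ((h1.add h2).add h3).deriv
  rw [hE]
  -- the ODE
  have hode : deriv (deriv u) t = g t - (2*δ) • deriv u t - A (u t) := by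
    rw [← hODE t ht]; abel
  -- inner product identities
  have eSS : ⟪S (u t), S (deriv u t)⟫ = ⟪A (u t), deriv u t⟫ := by
    have h : (⟪S (S (u t)), deriv u t⟫ : ℝ) = ⟪S (u t), S (deriv u t)⟫ := hSsym _ _
    rw [← h, hSS]
  have eSS2 : ⟪S (deriv u t), S (u t)⟫ = ⟪A (u t), deriv u t⟫ := by
    rw [real_inner_comm]; exact eSS
  have hQAu : Q (A (u t)) = A (u t) := by
    have hmem : A (u t) ∈ (LinearMap.ker (A : H →ₗ[ℝ] H))ᗮ := by
      rw [Submodule.mem_orthogonal]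
      intro y hy
      have hy0 : A y = 0 := hy
      have h' : (⟪A y, u t⟫ : ℝ) = ⟪y, A (u t)⟫ := hAsym y (u t)
      rw [← h', hy0, inner_zero_left]
    rw [← hQ3] at hmem
    obtain ⟨w, hw⟩ := hmem
    rw [← hw]; exact hQQ w
  have eAQ : ⟪A (u t), Q (u t)⟫ = ‖S (u t)‖^2 := by
    have h1 : (⟪Q (A (u t)), u t⟫ : ℝ) = ⟪A (u t), Q (u t)⟫ := hQsym _ _
    have h2 : (⟪S (S (u t)), u t⟫ : ℝ) = ⟪S (u t), S (u t)⟫ := hSsym _ _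
    rw [← h1, hQAu, ← hSS (u t), h2, real_inner_self_eq_norm_sq]
  have eY : ⟪deriv u t, Q (deriv u t)⟫ = ‖Q (deriv u t)‖^2 := by
    have h3 : (⟪Q (deriv u t), Q (deriv u t)⟫ : ℝ) = ⟪deriv u t, Q (Q (deriv u t))⟫ := hQsym _ _
    rw [← real_inner_self_eq_norm_sq, h3, hQQ]
  -- rewrite the derivative value
  have hD : (⟪deriv u t, deriv (deriv u) t⟫ + ⟪deriv (deriv u) t, deriv u t⟫)
      + (⟪S (u t), S (deriv u t)⟫ + ⟪S (deriv u t), S (u t)⟫)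
      + 2*μ*(⟪deriv u t, Q (deriv u t)⟫ + ⟪deriv (deriv u) t, Q (u t)⟫)
      = 2*(⟪g t, deriv u t⟫) - 4*δ*‖deriv u t‖^2 + 2*μ*(⟪g t, Q (u t)⟫)
        - 4*μ*δ*(⟪deriv u t, Q (u t)⟫) - 2*μ*‖S (u t)‖^2 + 2*μ*‖Q (deriv u t)‖^2 := by
    rw [hode]
    simp only [inner_sub_left, inner_sub_right, real_inner_smul_left, real_inner_smul_right]
    rw [eSS, eSS2, eAQ, eY, real_inner_comm (deriv u t) (g t),
      real_inner_comm (deriv u t) (A (u t)), real_inner_self_eq_norm_sq]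
    ring
  rw [hD]
  -- scalar facts
  have hc2 : ν * ‖Q (u t)‖^2 ≤ ‖S (u t)‖^2 := by
    have h := mul_le_mul_of_nonneg_left (hQbound (u t)) hν.le
    have hinv : ν * (1/ν * ‖S (u t)‖^2) = ‖S (u t)‖^2 := by field_simp
    linarith
  have hX := abs_le.mp (abs_real_inner_le_norm (deriv u t) (Q (u t)))
  have hY : ‖Q (deriv u t)‖^2 ≤ ‖deriv u t‖^2 := by
    have h := real_inner_le_norm (deriv u t) (Q (deriv u t))
    rw [eY] at h
    nlinarith [sq_nonneg (‖deriv u t‖ - ‖Q (deriv u t)‖), norm_nonneg (Q (deriv u t))]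
  exact stmt9_scalar ν δ μ (‖deriv u t‖) (‖S (u t)‖) (‖Q (u t)‖) (‖g t‖)
    (⟪deriv u t, Q (u t)⟫) (‖Q (deriv u t)‖^2) (⟪g t, deriv u t⟫) (⟪g t, Q (u t)⟫)
    hν hδ hμ0 hμ1 hμ2 (norm_nonneg _) (norm_nonneg _) (norm_nonneg _)
    hX.2 (neg_le.mp (neg_le.mpr hX.1)) hc2 (sq_nonneg _) hY
    (real_inner_le_norm _ _) (real_inner_le_norm _ _)
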